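/- arXiv:math/0508623 — 8 statements merged into one kernel-verified Lean document; each statement's English description precedes it below -/
import Mathlib

section
/- Let a ∈ PT_n and let z_a = |Z(a)|. The number of left annihilators of the semigroup (PT_n, *_a), i.e. of elements x ∈ PT_n with x *_a u = 0 for all u ∈ PT_n, equals (z_a + 1)^n. -/
/-- `PT n`: partial transformations of an `n`-element set, modeled as maps
`Fin n → Option (Fin n)` (`none` = undefined). -/
abbrev PT (n : ℕ) := Fin n → Option (Fin n)

/-- Left-to-right composition of partial maps: `(x ⬝ y) i = y (x i)` when defined. -/
def PT.comp {n : ℕ} (x y : PT n) : PT n := fun i => (x i).bind y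

/-- Deformed multiplication by `a`: `x *_a y = x · a · y` (left-to-right). -/
def PT.dmul {n : ℕ} (a x y : PT n) : PT n := PT.comp (PT.comp x a) y

/-- The nowhere defined map `0`. -/
def PT.zero {n : ℕ} : PT n := fun _ => none

/-- `z_a`: the number of points where `a` is undefined. -/
def PT.zcard {n : ℕ} (a : PT n) : ℕ :=
  (Finset.univ.filter fun i : Fin n => a i = none).card

/-- `rank a = |ran a|`. -/
def PT.rank {n : ℕ} (a : PT n) : ℕ :=
  (Finset.univ.filter fun t : Fin n => ∃ i, a i = some t).card

/-- `α_k(a)`: the number of points `t` whose full preimage `a⁻¹(t)` has exactly `k` elements. -/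
def PT.typeCount {n : ℕ} (a : PT n) (k : ℕ) : ℕ :=
  (Finset.univ.filter fun t : Fin n =>
    (Finset.univ.filter fun i : Fin n => a i = some t).card = k).card

/-- A permutation regarded as a (total) partial transformation. -/
def PT.ofPerm {n : ℕ} (σ : Equiv.Perm (Fin n)) : PT n := fun i => some (σ i)

/-- The number of left annihilators of `(PT n, *_a)` equals `(z_a + 1)^n`. -/
theorem card_left_annihilators {n : ℕ} (a : PT n) :
    (Finset.univ.filter fun x : PT n => ∀ u : PT n, PT.dmul a x u = PT.zero).card =
      (PT.zcard a + 1) ^ n := by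
  classical
  have h1 : (Finset.univ.filter fun x : PT n =>
      ∀ u : PT n, PT.dmul a x u = PT.zero) =
      (Finset.univ.filter fun x : PT n => ∀ i, (x i).bind a = none) := by
    ext x
    simp only [Finset.mem_filter, Finset.mem_univ, true_and]
    constructor
    · intro h i
      have := congrFun (h (fun j => some j)) i
      simpa [PT.dmul, PT.comp, PT.zero] using this
    · intro h u
      funext i
      simp [PT.dmul, PT.comp, PT.zero, h i]
  rw [h1]
  have h2 : (Finset.univ.filter fun x : PT n => ∀ i, (x i).bind a = none).card
      = Fintype.card {x : PT n // ∀ i, (x i).bind a = none} := by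
    rw [Fintype.card_subtype]
  rw [h2]
  have e1 : {x : PT n // ∀ i, (x i).bind a = none} ≃
      ∀ _ : Fin n, {b : Option (Fin n) // b.bind a = none} :=
    Equiv.subtypePiEquivPi (p := fun (_ : Fin n) (b : Option (Fin n)) => b.bind a = none)
  have e2 : {b : Option (Fin n) // b.bind a = none} ≃
      Option {j : Fin n // a j = none} :=
    { toFun := fun b => match b with
        | ⟨none, _⟩ => none
        | ⟨some j, h⟩ => some ⟨j, by simpa using h⟩
      invFun := fun o => match o with
        | none => ⟨none, rfl⟩
        | some ⟨j, h⟩ => ⟨some j, by simpa using h⟩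
      left_inv := fun b => by
        rcases b with ⟨b, hb⟩
        cases b <;> rfl
      right_inv := fun o => by
        rcases o with _ | ⟨j, h⟩ <;> rfl }
  rw [Fintype.card_congr e1, Fintype.card_pi]
  have h3 : Fintype.card {b : Option (Fin n) // b.bind a = none}
      = PT.zcard a + 1 := by
    rw [Fintype.card_congr e2, Fintype.card_option, Fintype.card_subtype]
    rfl
  simp only [Finset.prod_const, h3, Finset.card_univ, Fintype.card_fin]
end

section
/- Let a ∈ PT_n. An element y ∈ PT_n satisfies u *_a y = 0 for every u ∈ PT_n (where 0 is the nowhere defined map) if and only if Z(y) ⊇ ran(a), i.e. y is a right annihilator of (PT_n, *_a) exactly when y is undefined on the whole image of a. -/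
/-- `y` is a right annihilator of `(PT n, *_a)` iff `Z(y) ⊇ ran a`. -/
theorem right_annihilator_iff {n : ℕ} (a y : PT n) :
    (∀ u : PT n, PT.dmul a u y = PT.zero) ↔
      (∀ i t : Fin n, a i = some t → y t = none) := by
  constructor
  · intro h i t hat
    have := congrFun (h (fun j => some j)) i
    simpa [PT.dmul, PT.comp, PT.zero, hat] using this
  · intro h u
    funext i
    simp only [PT.dmul, PT.comp, PT.zero]
    cases hu : u i with
    | none => simp [hu]
    | some j =>
      cases ha : a j with
      | none => simp [hu, ha]
      | some t => simp [hu, ha, h j t ha]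
end

section
/- Let a ∈ PT_n with rank(a) = |ran(a)|. The number of right annihilators of the semigroup (PT_n, *_a), i.e. of elements y ∈ PT_n with u *_a y = 0 for all u ∈ PT_n, equals (n + 1)^(n − rank(a)). -/
/-- The number of right annihilators of `(PT n, *_a)` equals `(n + 1)^(n - rank a)`. -/
theorem card_right_annihilators {n : ℕ} (a : PT n) :
    (Finset.univ.filter fun y : PT n => ∀ u : PT n, PT.dmul a u y = PT.zero).card =
      (n + 1) ^ (n - PT.rank a) := by

  classical
  set ranS : Finset (Fin n) :=
    Finset.univ.filter (fun t : Fin n => ∃ i, a i = some t) with hranS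
  have hfilter : (Finset.univ.filter fun y : PT n =>
      ∀ u : PT n, PT.dmul a u y = PT.zero) =
      Fintype.piFinset (fun t : Fin n =>
        if t ∈ ranS then ({none} : Finset (Option (Fin n))) else Finset.univ) := by
    ext y
    simp only [Finset.mem_filter, Finset.mem_univ, true_and, Fintype.mem_piFinset]
    constructor
    · intro h t
      by_cases ht : t ∈ ranS
      · simp only [ht, if_pos, Finset.mem_singleton]
        rw [hranS] at ht
        simp only [Finset.mem_filter, Finset.mem_univ, true_and] at ht
        obtain ⟨i, hi⟩ := ht
        have := congrFun (h (fun _ => some i)) i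
        simpa [PT.dmul, PT.comp, PT.zero, hi] using this
      · simp [ht]
    · intro h u
      funext i
      simp only [PT.dmul, PT.comp, PT.zero]
      cases hu : u i with
      | none => rfl
      | some j =>
        cases ha : a j with
        | none => simp [ha]
        | some t =>
          have ht : t ∈ ranS := by
            rw [hranS]; simp only [Finset.mem_filter, Finset.mem_univ, true_and]
            exact ⟨j, ha⟩
          have := h t
          simp only [ht, if_pos, Finset.mem_singleton] at this
          simp [ha, this]
  rw [hfilter, Fintype.card_piFinset]
  have hcard : ∀ t : Fin n,
      (if t ∈ ranS then ({none} : Finset (Option (Fin n))) else Finset.univ).card =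
      if t ∈ ranS then 1 else n + 1 := by
    intro t
    by_cases ht : t ∈ ranS <;> simp [ht]
  simp only [hcard]
  rw [Finset.prod_ite, Finset.prod_const_one, Finset.prod_const, one_mul]
  congr 1
  rw [Finset.filter_not, Finset.card_sdiff_of_subset (Finset.filter_subset _ _),
    Finset.card_univ, Fintype.card_fin, Finset.filter_mem_eq_inter,
    Finset.univ_inter, hranS, PT.rank]
end

section
/- Let a ∈ PT_n. An element c ∈ PT_n is a two-sided annihilator of (PT_n, *_a), i.e. c *_a u = 0 and u *_a c = 0 for all u ∈ PT_n, if and only if ran(c) ⊆ Z(a) and Z(c) ⊇ ran(a); moreover, the number of such annihilators equals (z_a + 1)^(n − rank(a)). -/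
/-- `c` is a two-sided annihilator of `(PT n, *_a)` iff `ran c ⊆ Z(a)` and `Z(c) ⊇ ran a`;
moreover the number of two-sided annihilators equals `(z_a + 1)^(n - rank a)`. -/
theorem annihilator_iff_and_card {n : ℕ} (a : PT n) :
    (∀ c : PT n,
      ((∀ u : PT n, PT.dmul a c u = PT.zero) ∧ (∀ u : PT n, PT.dmul a u c = PT.zero)) ↔
        ((∀ i t : Fin n, c i = some t → a t = none) ∧
         (∀ i t : Fin n, a i = some t → c t = none))) ∧
    (Finset.univ.filter fun c : PT n =>
        (∀ u : PT n, PT.dmul a c u = PT.zero) ∧ (∀ u : PT n, PT.dmul a u c = PT.zero)).card =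
      (PT.zcard a + 1) ^ (n - PT.rank a) := by
  classical
  have key : ∀ c : PT n,
      ((∀ u : PT n, PT.dmul a c u = PT.zero) ∧ (∀ u : PT n, PT.dmul a u c = PT.zero)) ↔
        ((∀ i t : Fin n, c i = some t → a t = none) ∧
         (∀ i t : Fin n, a i = some t → c t = none)) := by
    intro c
    constructor
    · rintro ⟨h1, h2⟩
      constructor
      · intro i t hct
        have h := congrFun (h1 (fun j => some j)) i
        simp only [PT.dmul, PT.comp, PT.zero, hct, Option.bind_some] at h
        cases ha : a t with
        | none => rfl
        | some s => rw [ha] at h; simp at h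
      · intro i t hat
        have h := congrFun (h2 (fun j => some j)) i
        simpa only [PT.dmul, PT.comp, PT.zero, Option.bind_some, hat] using h
    · rintro ⟨h1, h2⟩
      constructor
      · intro u; funext i
        simp only [PT.dmul, PT.comp, PT.zero]
        cases h : c i with
        | none => rfl
        | some t => simp [h, h1 i t h]
      · intro u; funext i
        simp only [PT.dmul, PT.comp, PT.zero]
        cases h : u i with
        | none => rfl
        | some j =>
          rw [Option.bind_some]
          cases h' : a j with
          | none => rfl
          | some t => simp [h, h', h2 j t h']
  refine ⟨key, ?_⟩
  set T : Fin n → Finset (Option (Fin n)) := fun i =>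
    if ∃ j, a j = some i then {none}
    else insert none ((Finset.univ.filter fun s : Fin n => a s = none).image some) with hT
  have hset : (Finset.univ.filter fun c : PT n =>
      (∀ u : PT n, PT.dmul a c u = PT.zero) ∧ (∀ u : PT n, PT.dmul a u c = PT.zero)) =
      Fintype.piFinset T := by
    ext c
    simp only [Finset.mem_filter, Finset.mem_univ, true_and, Fintype.mem_piFinset, key]
    constructor
    · rintro ⟨h1, h2⟩ i
      by_cases hr : ∃ j, a j = some i
      · obtain ⟨j, hj⟩ := hr
        have hr' : ∃ j, a j = some i := ⟨j, hj⟩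
        simp only [hT, if_pos hr', Finset.mem_singleton]
        exact h2 j i hj
      · simp only [hT, if_neg hr, Finset.mem_insert, Finset.mem_image, Finset.mem_filter,
          Finset.mem_univ, true_and]
        cases h : c i with
        | none => exact Or.inl rfl
        | some t => exact Or.inr ⟨t, h1 i t h, rfl⟩
    · intro h
      constructor
      · intro i t hct
        have hi := h i
        by_cases hr : ∃ j, a j = some i
        · simp only [hT, if_pos hr, Finset.mem_singleton, hct] at hi
          exact absurd hi (by simp)
        · simp only [hT, if_neg hr, Finset.mem_insert, Finset.mem_image, Finset.mem_filter,
            Finset.mem_univ, true_and, hct] at hi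
          rcases hi with h0 | ⟨s, hs, heq⟩
          · exact absurd h0 (by simp)
          · obtain rfl : s = t := by injection heq
            exact hs
      · intro i t hat
        have ht := h t
        have hr' : ∃ j, a j = some t := ⟨i, hat⟩
        simp only [hT, if_pos hr', Finset.mem_singleton] at ht
        exact ht
  rw [hset, Fintype.card_piFinset]
  have hcardT : ∀ i, (T i).card = if ∃ j, a j = some i then 1 else PT.zcard a + 1 := by
    intro i
    by_cases hr : ∃ j, a j = some i
    · simp [hT, if_pos hr]
    · rw [hT]
      simp only [if_neg hr]
      rw [Finset.card_insert_of_notMem (by simp),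
        Finset.card_image_of_injective _ (Option.some_injective _)]
      rfl
  rw [Finset.prod_congr rfl (fun i _ => hcardT i), Finset.prod_ite, Finset.prod_const_one,
    one_mul, Finset.prod_const]
  congr 1
  have : (Finset.univ.filter fun i : Fin n => ¬∃ j, a j = some i) =
      Finset.univ \ (Finset.univ.filter fun i : Fin n => ∃ j, a j = some i) := by
    rw [← Finset.filter_not]
  rw [this, Finset.card_sdiff_of_subset (Finset.filter_subset _ _), Finset.card_univ, Fintype.card_fin]
  rfl
end

section
/- Let a ∈ PT_n and fix x₀ ∈ PT_n; set y := x₀·a (left-to-right composition), with domain {i₁,...,i_p} (so y is defined at exactly p points). Then the cardinality of the equivalence class {x ∈ PT_n : x·a = x₀·a} of x₀ under ∼_a equals n_a(y(i₁))·n_a(y(i₂))·…·n_a(y(i_p))·(z_a + 1)^(n−p), where for t ∈ ran(a), n_a(t) = |a⁻¹(t)| is the cardinality of the full preimage of t under a, and z_a = |Z(a)|. -/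
lemma fiber_some {n : ℕ} (a : Fin n → Option (Fin n)) (v : Option (Fin n)) (hv : v ≠ none) :
    (Finset.univ.filter fun o : Option (Fin n) => o.bind a = v) =
      (Finset.univ.filter fun j : Fin n => a j = v).map ⟨some, Option.some_injective _⟩ := by
  ext o
  cases o with
  | none => simp [Option.bind, hv.symm]
  | some j => simp [Option.bind, eq_comm]

lemma fiber_none {n : ℕ} (a : Fin n → Option (Fin n)) :
    (Finset.univ.filter fun o : Option (Fin n) => o.bind a = none) =
      insert none ((Finset.univ.filter fun j : Fin n => a j = none).map
        ⟨some, Option.some_injective _⟩) := by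
  ext o
  cases o with
  | none => simp
  | some j => simp [eq_comm]

/-- The cardinality of the `∼_a`-class of `x₀` equals
`n_a(y i₁) ⋯ n_a(y i_p) · (z_a + 1)^(n - p)`, where `y = x₀·a` has domain
`{i₁,…,i_p}` and `n_a(t) = |a⁻¹(t)|`. -/
theorem card_sim_class {n : ℕ} (a x₀ : PT n) :
    (Finset.univ.filter fun x : PT n => PT.comp x a = PT.comp x₀ a).card =
      (∏ i ∈ Finset.univ.filter (fun i : Fin n => (PT.comp x₀ a) i ≠ none),
        (Finset.univ.filter fun j : Fin n => a j = (PT.comp x₀ a) i).card) *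
      (PT.zcard a + 1) ^
        (n - (Finset.univ.filter fun i : Fin n => (PT.comp x₀ a) i ≠ none).card) := by
  classical
  set y := PT.comp x₀ a with hy
  have key : (Finset.univ.filter fun x : PT n => PT.comp x a = y) =
      Fintype.piFinset (fun i => Finset.univ.filter fun o : Option (Fin n) => o.bind a = y i) := by
    ext x
    simp [PT.comp, funext_iff, Fintype.mem_piFinset]
  rw [key, Fintype.card_piFinset,
    ← Finset.prod_filter_mul_prod_filter_not Finset.univ (fun i => y i ≠ none)]
  congr 1
  · refine Finset.prod_congr rfl fun i hi => ?_
    rw [fiber_some a (y i) (Finset.mem_filter.mp hi).2, Finset.card_map]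
  · have hc : ∀ i ∈ Finset.univ.filter (fun i : Fin n => ¬ y i ≠ none),
        (Finset.univ.filter fun o : Option (Fin n) => o.bind a = y i).card = PT.zcard a + 1 := by
      intro i hi
      have : y i = none := not_not.mp (Finset.mem_filter.mp hi).2
      rw [this, fiber_none a, Finset.card_insert_of_notMem (by simp), Finset.card_map,
        PT.zcard, Nat.add_comm]
    rw [Finset.prod_congr rfl hc, Finset.prod_const]
    congr 1
    have := Finset.card_filter_add_card_filter_not (s := Finset.univ)
      (p := fun i : Fin n => y i ≠ none)
    simp only [Finset.card_univ, Fintype.card_fin] at this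
    omega
end

section
/- Let a ∈ PT_n, let ρ_a be the partition of N induced by a (two points lie in one block iff a takes the same value on them, with Z(a) a separate block), let z_a = |Z(a)|, and let m be the smallest cardinality of a block of ρ_a contained in dom(a). Suppose m > z_a + 1. Then the number of equivalence classes of ∼_a of cardinality m·(z_a + 1)^(n−1) equals n·α_m, where α_m is the number of points t ∈ ran(a) whose full preimage a⁻¹(t) has exactly m elements. -/
private def cnt {n : ℕ} (a : PT n) (v : Option (Fin n)) : ℕ :=
  (Finset.univ.filter fun w : Option (Fin n) => w.bind a = v).card

private lemma cnt_none {n : ℕ} (a : PT n) : cnt a none = PT.zcard a + 1 := by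
  unfold cnt PT.zcard
  have h : (Finset.univ.filter fun w : Option (Fin n) => w.bind a = none)
      = insert none ((Finset.univ.filter fun j : Fin n => a j = none).image some) := by
    ext w
    cases w with
    | none => simp
    | some j => simp [Option.bind]
  rw [h, Finset.card_insert_of_notMem (by simp),
    Finset.card_image_of_injective _ (Option.some_injective _)]

private lemma cnt_some {n : ℕ} (a : PT n) (t : Fin n) :
    cnt a (some t) = (Finset.univ.filter fun j : Fin n => a j = some t).card := by
  unfold cnt
  have h : (Finset.univ.filter fun w : Option (Fin n) => w.bind a = some t)
      = (Finset.univ.filter fun j : Fin n => a j = some t).image some := by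
    ext w
    cases w with
    | none => simp
    | some j => simp [Option.bind]
  rw [h, Finset.card_image_of_injective _ (Option.some_injective _)]

private lemma fiber_card {n : ℕ} (a : PT n) (y : PT n) :
    (Finset.univ.filter fun x : PT n => PT.comp x a = y).card = ∏ i, cnt a (y i) := by
  rw [← Fintype.card_subtype]
  have e : {x : PT n // PT.comp x a = y} ≃ ∀ i, {w : Option (Fin n) // w.bind a = y i} :=
    { toFun := fun x i => ⟨x.1 i, congrFun x.2 i⟩
      invFun := fun f => ⟨fun i => (f i).1, funext fun i => (f i).2⟩
      left_inv := fun x => rfl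
      right_inv := fun f => rfl }
  rw [Fintype.card_congr e, Fintype.card_pi]
  exact Finset.prod_congr rfl fun i _ => Fintype.card_subtype _

/-- If `m`, the smallest cardinality of a block of `ρ_a` contained in `dom a`, satisfies
`m > z_a + 1`, then the number of `∼_a`-classes of cardinality `m·(z_a + 1)^(n-1)`
equals `n·α_m`. Equivalence classes are identified with the fibers of `x ↦ x·a`. -/
theorem card_classes_of_card_eq_of_gt {n : ℕ} (a : PT n) (m : ℕ)
    (hm_le : ∀ t : Fin n, (∃ i, a i = some t) →
      m ≤ (Finset.univ.filter fun j : Fin n => a j = some t).card)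
    (hm_ex : ∃ t : Fin n, (∃ i, a i = some t) ∧
      (Finset.univ.filter fun j : Fin n => a j = some t).card = m)
    (hgt : PT.zcard a + 1 < m) :
    ((Finset.univ.image fun x : PT n => PT.comp x a).filter fun y : PT n =>
        (Finset.univ.filter fun x : PT n => PT.comp x a = y).card =
          m * (PT.zcard a + 1) ^ (n - 1)).card =
      n * PT.typeCount a m := by
  classical
  obtain ⟨t0, _, _⟩ := hm_ex
  have hn : 0 < n := t0.pos
  set b := PT.zcard a + 1 with hbdef
  have hb0 : 0 < b := Nat.succ_pos _
  have hm0 : 0 < m := lt_trans hb0 hgt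
  set T : Finset (Fin n) := Finset.univ.filter fun t : Fin n =>
    (Finset.univ.filter fun j : Fin n => a j = some t).card = m with hT
  set F : Fin n × Fin n → PT n := fun p => fun j => if j = p.1 then some p.2 else none with hF
  have hset : ((Finset.univ.image fun x : PT n => PT.comp x a).filter fun y : PT n =>
      (Finset.univ.filter fun x : PT n => PT.comp x a = y).card = m * b ^ (n - 1))
      = (Finset.univ ×ˢ T).image F := by
    ext y
    simp only [Finset.mem_filter, Finset.mem_image, Finset.mem_univ, true_and,
      Finset.mem_product, hT, hF]
    constructor
    · rintro ⟨⟨x, hx⟩, hcard⟩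
      rw [fiber_card] at hcard
      set S : Finset (Fin n) := Finset.univ.filter fun i : Fin n => y i ≠ none with hS
      have hsplit := Finset.prod_filter_mul_prod_filter_not Finset.univ
        (fun i : Fin n => y i ≠ none) (fun i => cnt a (y i))
      have hnone : ∀ i ∈ Finset.univ.filter (fun i : Fin n => ¬ y i ≠ none),
          cnt a (y i) = b := by
        intro i hi
        rw [Finset.mem_filter, not_not] at hi
        rw [hi.2, cnt_none]
      have hcardS : S.card + (Finset.univ.filter (fun i : Fin n => ¬ y i ≠ none)).card = n := by
        rw [hS, Finset.card_filter_add_card_filter_not, Finset.card_univ,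
          Fintype.card_fin]
      have hrest : ∏ i ∈ Finset.univ.filter (fun i : Fin n => ¬ y i ≠ none),
          cnt a (y i) = b ^ (n - S.card) := by
        rw [Finset.prod_congr rfl hnone, Finset.prod_const]
        congr 1
        omega
      have hEq : (∏ i ∈ S, cnt a (y i)) * b ^ (n - S.card) = m * b ^ (n - 1) := by
        rw [← hrest, hsplit]
        exact hcard
      have hSle : ∀ i ∈ S, m ≤ cnt a (y i) := by
        intro i hi
        rw [hS, Finset.mem_filter] at hi
        obtain ⟨t, ht⟩ := Option.ne_none_iff_exists'.mp hi.2
        have hib : (x i).bind a = some t := by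
          have := congrFun hx i
          rw [ht] at this
          exact this
        obtain ⟨j, _, haj⟩ := Option.bind_eq_some_iff.mp hib
        rw [ht, cnt_some]
        exact hm_le t ⟨j, haj⟩
      have hSn : S.card ≤ n := by omega
      -- show S.card = 1
      have hk1 : S.card = 1 := by
        by_contra hk
        rcases Nat.lt_or_ge S.card 1 with h1 | h1
        · -- S.card = 0
          have h0 : S.card = 0 := by omega
          have hSe : S = ∅ := Finset.card_eq_zero.mp h0
          rw [hSe] at hEq
          simp only [Finset.prod_empty, one_mul, Finset.card_empty, Nat.sub_zero] at hEq
          have : b ^ n = b * b ^ (n - 1) := by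
            rw [← pow_succ']
            congr 1
            omega
          rw [this] at hEq
          have := Nat.eq_of_mul_eq_mul_right (pow_pos hb0 (n - 1)) hEq
          omega
        · -- S.card ≥ 2
          have h2 : 2 ≤ S.card := by omega
          have hP : m ^ S.card ≤ ∏ i ∈ S, cnt a (y i) := by
            rw [← Finset.prod_const]
            exact Finset.prod_le_prod (fun _ _ => Nat.zero_le _) hSle
          set k := S.card with hk2
          set j := n - k with hj
          have hnj : n = k + j := by omega
          have hlt : m * b ^ (n - 1) < m ^ k * b ^ j := by
            have hn1 : n - 1 = (k - 1) + j := by omega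
            have hkk : k = (k - 1) + 1 := by omega
            have hpowlt : b ^ (k - 1) < m ^ (k - 1) :=
              Nat.pow_lt_pow_left hgt (by omega)
            calc m * b ^ (n - 1) = (m * b ^ j) * b ^ (k - 1) := by
                  rw [hn1, pow_add]; ring
              _ < (m * b ^ j) * m ^ (k - 1) :=
                  mul_lt_mul_of_pos_left hpowlt (Nat.mul_pos hm0 (pow_pos hb0 j))
              _ ≤ (m ^ (k - 1) * m) * b ^ j := by ring_nf; rfl
              _ = m ^ k * b ^ j := by
                  rw [← pow_succ]
                  congr 2
                  omega
          have : m ^ k * b ^ j ≤ m * b ^ (n - 1) := by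
            rw [← hEq]
            exact Nat.mul_le_mul_right _ hP
          omega
      obtain ⟨i0, hi0⟩ := Finset.card_eq_one.mp hk1
      have hi0S : i0 ∈ S := hi0 ▸ Finset.mem_singleton_self i0
      rw [hS, Finset.mem_filter] at hi0S
      obtain ⟨t, ht⟩ := Option.ne_none_iff_exists'.mp hi0S.2
      rw [hi0, Finset.prod_singleton, ht, cnt_some, Finset.card_singleton] at hEq
      have hpre : (Finset.univ.filter fun j : Fin n => a j = some t).card = m :=
        Nat.eq_of_mul_eq_mul_right (pow_pos hb0 (n - 1)) hEq
      refine ⟨(i0, t), hpre, ?_⟩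
      funext j
      by_cases hj : j = i0
      · subst hj; simpa using ht.symm
      · simp only [if_neg hj]
        have : j ∉ S := by
          rw [hi0, Finset.mem_singleton]
          exact hj
        rw [hS, Finset.mem_filter, not_and, not_not] at this
        exact (this (Finset.mem_univ j)).symm
    · rintro ⟨⟨i, t⟩, hpre, rfl⟩
      have hfib : (Finset.univ.filter fun x : PT n =>
          PT.comp x a = fun j => if j = i then some t else none).card = m * b ^ (n - 1) := by
        rw [fiber_card]
        have hcnt : ∀ j : Fin n, cnt a (if j = i then some t else none)
            = if j = i then m else b := by
          intro j
          by_cases hj : j = i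
          · rw [if_pos hj, if_pos hj, cnt_some, hpre]
          · rw [if_neg hj, if_neg hj, cnt_none]
        calc ∏ j, cnt a (if j = i then some t else none)
            = ∏ j, (if j = i then m else b) := Finset.prod_congr rfl fun j _ => hcnt j
          _ = (if i = i then m else b) * ∏ j ∈ Finset.univ.erase i,
                (if j = i then m else b) :=
              (Finset.mul_prod_erase Finset.univ _ (Finset.mem_univ i)).symm
          _ = m * b ^ (n - 1) := by
              rw [if_pos rfl]
              congr 1
              rw [Finset.prod_congr rfl (fun j hj => if_neg (Finset.ne_of_mem_erase hj)),
                Finset.prod_const, Finset.card_erase_of_mem (Finset.mem_univ i),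
                Finset.card_univ, Fintype.card_fin]
      refine ⟨?_, hfib⟩
      have hpos : 0 < (Finset.univ.filter fun x : PT n =>
          PT.comp x a = fun j => if j = i then some t else none).card := by
        rw [hfib]
        exact Nat.mul_pos hm0 (pow_pos hb0 (n - 1))
      obtain ⟨x, hx⟩ := Finset.card_pos.mp hpos
      exact ⟨x, (Finset.mem_filter.mp hx).2⟩
  rw [hset]
  have hinj : Set.InjOn F ((Finset.univ ×ˢ T : Finset (Fin n × Fin n)) : Set (Fin n × Fin n)) := by
    intro p _ q _ h
    have h1 := congrFun h p.1
    simp only [hF, if_pos rfl] at h1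
    by_cases hpq : p.1 = q.1
    · rw [if_pos hpq] at h1
      exact Prod.ext hpq (Option.some.inj h1)
    · rw [if_neg hpq] at h1
      exact absurd h1 (Option.some_ne_none _)
  rw [Finset.card_image_of_injOn hinj, Finset.card_product, Finset.card_univ, Fintype.card_fin]
  rfl
end

section
/- Let a, b ∈ PT_n have the same type, i.e. for every k ∈ {1,...,n} the number of points of N whose full a-preimage has exactly k elements equals the number of points whose full b-preimage has exactly k elements. Then the semigroups (PT_n, *_a) and (PT_n, *_b) are isomorphic. -/
open Finset in

lemma exists_perm_of_fiber_card {n : ℕ} {β : Type*} [DecidableEq β] (f g : Fin n → β)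
    (h : ∀ c, (univ.filter fun i => f i = c).card = (univ.filter fun i => g i = c).card) :
    ∃ p : Equiv.Perm (Fin n), ∀ i, g (p i) = f i := by
  classical
  have e : ∀ c : β, (f ⁻¹' {c}) ≃ (g ⁻¹' {c}) := by
    intro c
    apply Fintype.equivOfCardEq
    simp only [Set.preimage, Set.mem_singleton_iff, Fintype.card_subtype]
    exact h c
  exact ⟨Equiv.ofFiberEquiv e, fun i => Equiv.ofFiberEquiv_map e i⟩


/-- If `a` and `b` have the same type then `(PT n, *_a)` and `(PT n, *_b)` are isomorphic. -/
theorem iso_of_same_type {n : ℕ} (a b : PT n)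
    (h : ∀ k : ℕ, 1 ≤ k → PT.typeCount a k = PT.typeCount b k) :
    ∃ e : PT n ≃ PT n, ∀ x y : PT n, e (PT.dmul a x y) = PT.dmul b (e x) (e y) := by
  open Finset in
  classical
  set fa : Fin n → ℕ := fun t => (univ.filter fun i : Fin n => a i = some t).card with hfa
  set fb : Fin n → ℕ := fun t => (univ.filter fun i : Fin n => b i = some t).card with hfb
  -- total count lemma
  have hsum : ∀ x : PT n, n = ∑ k ∈ range (n+1), PT.typeCount x k := by
    intro x
    have := Finset.card_eq_sum_card_fiberwise
      (f := fun t : Fin n => (univ.filter fun i : Fin n => x i = some t).card)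
      (s := univ) (t := range (n+1)) (fun t _ => by
        simp only [Finset.mem_coe, mem_range, Nat.lt_succ_iff]
        exact le_trans (card_filter_le _ _) (by simp))
    simpa [PT.typeCount] using this
  have htype : ∀ k, PT.typeCount a k = PT.typeCount b k := by
    intro k
    cases k with
    | succ k => exact h _ (Nat.succ_le_succ (Nat.zero_le _))
    | zero =>
      have ha := hsum a
      have hb := hsum b
      rw [Finset.sum_range_succ'] at ha hb
      have : ∑ i ∈ range n, PT.typeCount a (i+1) = ∑ i ∈ range n, PT.typeCount b (i+1) :=
        Finset.sum_congr rfl (fun i _ => h _ (Nat.succ_le_succ (Nat.zero_le _)))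
      omega
  -- permutation on codomains
  obtain ⟨p, hp⟩ := exists_perm_of_fiber_card fa fb (fun c => htype c)
  -- none-fibers have equal size
  have hnone : (univ.filter fun i : Fin n => a i = none).card
      = (univ.filter fun i : Fin n => b i = none).card := by
    have hx : ∀ x : PT n, n = (univ.filter fun i : Fin n => x i = none).card
        + ∑ t : Fin n, (univ.filter fun i : Fin n => x i = some t).card := by
      intro x
      have := Finset.card_eq_sum_card_fiberwise (f := x) (s := univ)
        (t := (univ : Finset (Option (Fin n)))) (fun i _ => mem_univ _)
      simpa [Fintype.sum_option] using this
    have ha := hx a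
    have hb := hx b
    have hsum2 : ∑ t : Fin n, fb t = ∑ t : Fin n, fa t := by
      rw [← Equiv.sum_comp p fb]
      exact Finset.sum_congr rfl (fun t _ => hp t)
    simp only [hfa, hfb] at hsum2
    omega
  -- permutation on domains
  set G : PT n := fun i => (b i).map p.symm with hG
  have hGfib : ∀ c : Option (Fin n),
      (univ.filter fun i : Fin n => a i = c).card = (univ.filter fun i : Fin n => G i = c).card := by
    intro c
    cases c with
    | none =>
      rw [hnone]
      congr 1
      apply filter_congr
      intro i _
      simp [hG, Option.map_eq_none_iff]
    | some t =>
      have : (univ.filter fun i : Fin n => G i = some t)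
          = (univ.filter fun i : Fin n => b i = some (p t)) := by
        apply filter_congr
        intro i _
        simp only [hG, Option.map_eq_some_iff]
        constructor
        · rintro ⟨s, hs, rfl⟩
          simpa [Equiv.apply_symm_apply] using hs
        · intro hbi
          exact ⟨p t, hbi, p.symm_apply_apply t⟩
      rw [this]
      exact (hp t).symm
  obtain ⟨q, hq⟩ := exists_perm_of_fiber_card a G hGfib
  -- hq : ∀ i, G (q i) = a i, i.e. a i = (b (q i)).map p.symm
  refine ⟨⟨fun x i => (x (p.symm i)).map q, fun x i => (x (p i)).map q.symm, ?_, ?_⟩, ?_⟩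
  · intro x
    funext i
    simp [Option.map_map, Function.comp_def]
  · intro x
    funext i
    simp [Option.map_map, Function.comp_def]
  · intro x y
    funext i
    simp only [PT.dmul, PT.comp, Equiv.coe_fn_mk]
    cases hx : x (p.symm i) with
    | none => simp
    | some j =>
      simp only [Option.bind_some, Option.map_some]
      rw [← hq j]
      cases hb : b (q j) with
      | none => simp [hG, hb]
      | some s => simp [hG, hb]
end

section
/- The semigroups (PT_n, *_a) and (PT_n, *_b) are isomorphic if and only if the partial transformations a and b have the same type. -/
open Finset

namespace PTaux

variable {n : ℕ}

/-- fiber size of `a` over `t` -/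
def fib (a : PT n) (t : Fin n) : ℕ := (Finset.univ.filter fun i : Fin n => a i = some t).card

def q (a : PT n) : ℕ := 1 + PT.zcard a

lemma one_le_q (a : PT n) : 1 ≤ q a := Nat.le_add_right 1 _

lemma fib_le (a : PT n) (t : Fin n) : fib a t ≤ n := by
  have := Finset.card_filter_le (Finset.univ : Finset (Fin n)) (fun i => a i = some t)
  simpa [fib] using this

/-- pointwise weight -/
def w (a : PT n) (o : Option (Fin n)) : ℕ :=
  (Finset.univ.filter fun o' : Option (Fin n) => o'.bind a = o).card

def W (a : PT n) (c : PT n) : ℕ := ∏ i, w a (c i)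

lemma w_some (a : PT n) (t : Fin n) : w a (some t) = fib a t := by
  unfold w fib
  rw [show (Finset.univ.filter fun o' : Option (Fin n) => o'.bind a = some t)
      = (Finset.univ.filter fun i : Fin n => a i = some t).image some from ?_]
  · exact Finset.card_image_of_injective _ (Option.some_injective _)
  · ext o; cases o <;> simp

lemma w_none (a : PT n) : w a none = q a := by
  unfold w q PT.zcard
  rw [show (Finset.univ.filter fun o' : Option (Fin n) => o'.bind a = none)
      = insert none ((Finset.univ.filter fun i : Fin n => a i = none).image some) from ?_]
  · rw [Finset.card_insert_of_notMem (by simp),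
      Finset.card_image_of_injective _ (Option.some_injective _)]
    omega
  · ext o; cases o <;> simp

lemma card_fiber (a c : PT n) :
    ((Finset.univ : Finset (PT n)).filter fun x => PT.comp x a = c).card = W a c := by
  classical
  have h1 : ((Finset.univ : Finset (PT n)).filter fun x => PT.comp x a = c).card
      = Fintype.card {x : PT n // ∀ i, (x i).bind a = c i} := by
    rw [Fintype.card_subtype]
    apply congrArg
    apply Finset.filter_congr
    intro x _
    constructor
    · intro h i; exact congrFun h i
    · intro h; funext i; exact h i
  rw [h1, Fintype.card_congr (Equiv.subtypePiEquivPi (p := fun i (o : Option (Fin n)) => o.bind a = c i)), Fintype.card_pi]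
  unfold W w
  apply Finset.prod_congr rfl
  intro i _
  rw [Fintype.card_subtype]

lemma card_range_comp (c : PT n) :
    Nat.card (Set.range fun y : PT n => PT.comp c y) = (n + 1) ^ PT.rank c := by
  classical
  let ext0 : ({t : Fin n // ∃ i, c i = some t} → Option (Fin n)) → PT n := fun u t =>
    if ht : ∃ i, c i = some t then u ⟨t, ht⟩ else none
  let h : ({t : Fin n // ∃ i, c i = some t} → Option (Fin n)) → PT n :=
    fun u => PT.comp c (ext0 u)
  have hrange : Set.range (fun y : PT n => PT.comp c y) = Set.range h := by
    apply Set.Subset.antisymm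
    · rintro _ ⟨y, rfl⟩
      refine ⟨fun t => y t.1, ?_⟩
      funext i
      show (c i).bind (ext0 (fun t => y t.1)) = (c i).bind y
      cases hci : c i with
      | none => rfl
      | some t =>
          simp only [Option.bind_some, ext0]
          rw [dif_pos ⟨i, hci⟩]
    · rintro _ ⟨u, rfl⟩; exact ⟨ext0 u, rfl⟩
  have hinj : Function.Injective h := by
    intro u u' huu
    funext t
    obtain ⟨i, hi⟩ := t.2
    have h1 : ∀ v : ({t : Fin n // ∃ i, c i = some t} → Option (Fin n)), h v i = v t := by
      intro v
      show (c i).bind (ext0 v) = v t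
      rw [hi, Option.bind_some]
      show (if ht : ∃ i, c i = some t.1 then v ⟨t.1, ht⟩ else none) = v t
      rw [dif_pos t.2]
    rw [← h1 u, ← h1 u', huu]
  rw [hrange, Nat.card_range_of_injective hinj, Nat.card_eq_fintype_card, Fintype.card_fun,
    Fintype.card_option, Fintype.card_fin, Fintype.card_subtype]
  rfl

def idPT : PT n := fun i => some i

lemma comp_id (c : PT n) : PT.comp c idPT = c := by
  funext i
  show (c i).bind idPT = c i
  cases c i <;> rfl

lemma comp_zero (c : PT n) : PT.comp c PT.zero = PT.zero := by
  funext i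
  show (c i).bind PT.zero = none
  cases c i <;> rfl

lemma zero_comp (c : PT n) : PT.comp PT.zero c = PT.zero := rfl

lemma class_iff (a x x' : PT n) :
    (∀ y, PT.dmul a x' y = PT.dmul a x y) ↔ PT.comp x' a = PT.comp x a := by
  constructor
  · intro h
    have := h idPT
    simpa [PT.dmul, comp_id] using this
  · intro h y
    unfold PT.dmul
    rw [h]

lemma zero_iff (a x : PT n) :
    (∀ y y', PT.dmul a x y = PT.dmul a x y') ↔ PT.comp x a = PT.zero := by
  constructor
  · intro h
    have := h idPT PT.zero
    simpa [PT.dmul, comp_id, comp_zero] using this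
  · intro h y y'
    unfold PT.dmul
    rw [h, zero_comp, zero_comp]

section Inv

variable {a b : PT n} (e : PT n ≃ PT n)
  (he : ∀ x y : PT n, e (PT.dmul a x y) = PT.dmul b (e x) (e y))

include he

lemma inv_zero_card :
    Nat.card {x : PT n // ∀ y y', PT.dmul a x y = PT.dmul a x y'}
      = Nat.card {x : PT n // ∀ y y', PT.dmul b x y = PT.dmul b x y'} := by
  apply Nat.card_congr
  apply Equiv.subtypeEquiv e
  intro x
  constructor
  · intro h y y'
    rw [← Equiv.apply_symm_apply e y, ← Equiv.apply_symm_apply e y', ← he, ← he, h]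
  · intro h y y'
    apply e.injective
    rw [he, he]
    exact h (e y) (e y')

lemma inv_class_card (x : PT n) :
    Nat.card {x' : PT n // ∀ y, PT.dmul a x' y = PT.dmul a x y}
      = Nat.card {x' : PT n // ∀ y, PT.dmul b x' y = PT.dmul b (e x) y} := by
  apply Nat.card_congr
  apply Equiv.subtypeEquiv e
  intro x'
  constructor
  · intro h y
    rw [← Equiv.apply_symm_apply e y, ← he, ← he, h]
  · intro h y
    apply e.injective
    rw [he, he]
    exact h (e y)

lemma inv_range_card (x : PT n) :
    Nat.card (Set.range fun y => PT.dmul a x y)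
      = Nat.card (Set.range fun y => PT.dmul b (e x) y) := by
  have him : (Set.range fun y => PT.dmul b (e x) y) = e '' (Set.range fun y => PT.dmul a x y) := by
    ext z
    constructor
    · rintro ⟨y, rfl⟩
      exact ⟨PT.dmul a x (e.symm y), ⟨e.symm y, rfl⟩, by rw [he, Equiv.apply_symm_apply]⟩
    · rintro ⟨-, ⟨y, rfl⟩, rfl⟩
      exact ⟨e y, (he x y).symm⟩
  rw [him, Nat.card_image_of_injective e.injective]

end Inv

def P (a : PT n) (v : ℕ) (x : PT n) : Prop :=
  Nat.card (Set.range fun y => PT.dmul a x y) ≤ n + 1 ∧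
    Nat.card {x' : PT n // ∀ y, PT.dmul a x' y = PT.dmul a x y} = v

lemma inv_P_card {a b : PT n} (e : PT n ≃ PT n)
    (he : ∀ x y : PT n, e (PT.dmul a x y) = PT.dmul b (e x) (e y)) (v : ℕ) :
    Nat.card {x : PT n // P a v x} = Nat.card {x : PT n // P b v x} := by
  apply Nat.card_congr
  apply Equiv.subtypeEquiv e
  intro x
  unfold P
  rw [inv_range_card e he x, inv_class_card e he x]

lemma class_card (a x : PT n) :
    Nat.card {x' : PT n // ∀ y, PT.dmul a x' y = PT.dmul a x y} = W a (PT.comp x a) := by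
  classical
  rw [Nat.card_eq_fintype_card,
    Fintype.card_congr (Equiv.subtypeEquivRight (fun x' => class_iff a x x')),
    Fintype.card_subtype]
  exact card_fiber a (PT.comp x a)

lemma W_zero (a : PT n) : W a PT.zero = q a ^ n := by
  unfold W
  have h : ∀ i : Fin n, w a (PT.zero i) = q a := fun i => w_none a
  rw [Finset.prod_congr rfl (fun i _ => h i), Finset.prod_const, Finset.card_univ,
    Fintype.card_fin]

lemma zero_card (a : PT n) :
    Nat.card {x : PT n // ∀ y y', PT.dmul a x y = PT.dmul a x y'} = q a ^ n := by
  classical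
  rw [Nat.card_eq_fintype_card,
    Fintype.card_congr (Equiv.subtypeEquivRight (fun x => zero_iff a x)),
    Fintype.card_subtype, card_fiber a PT.zero, W_zero]

lemma range_card_dmul (a x : PT n) :
    Nat.card (Set.range fun y => PT.dmul a x y) = (n + 1) ^ PT.rank (PT.comp x a) :=
  card_range_comp (PT.comp x a)

def Sfin (a : PT n) (v : ℕ) : Finset (PT n) :=
  (Finset.univ : Finset (PT n)).filter fun c => PT.rank c ≤ 1 ∧ W a c = v

lemma P_iff (hn : 1 ≤ n) (a : PT n) (v : ℕ) (x : PT n) :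
    P a v x ↔ (PT.rank (PT.comp x a) ≤ 1 ∧ W a (PT.comp x a) = v) := by
  unfold P
  rw [range_card_dmul, class_card]
  constructor
  · rintro ⟨h1, h2⟩
    refine ⟨?_, h2⟩
    have h3 : (n + 1) ^ PT.rank (PT.comp x a) ≤ (n + 1) ^ 1 := by simpa using h1
    exact (Nat.pow_le_pow_iff_right (by omega)).mp h3
  · rintro ⟨h1, h2⟩
    refine ⟨?_, h2⟩
    calc (n + 1) ^ PT.rank (PT.comp x a) ≤ (n + 1) ^ 1 := Nat.pow_le_pow_right (by omega) h1
    _ = n + 1 := pow_one _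

lemma card_P (hn : 1 ≤ n) (a : PT n) (v : ℕ) :
    Nat.card {x : PT n // P a v x} = (Sfin a v).card * v := by
  classical
  rw [Nat.card_eq_fintype_card, Fintype.card_subtype]
  have h1 : (Finset.univ.filter fun x : PT n => P a v x)
      = Finset.univ.filter
          fun x : PT n => (PT.rank (PT.comp x a) ≤ 1 ∧ W a (PT.comp x a) = v) := by
    apply Finset.filter_congr
    intro x _
    exact P_iff hn a v x
  rw [h1,
    Finset.card_eq_sum_card_fiberwise (f := fun x : PT n => PT.comp x a) (t := Sfin a v)
      (by
        intro x hx
        simp only [Finset.mem_coe, Finset.mem_filter, Finset.mem_univ, true_and] at hx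
        simp only [Finset.mem_coe, Sfin, Finset.mem_filter, Finset.mem_univ, true_and]
        exact hx)]
  have h2 : ∀ c ∈ Sfin a v,
      (((Finset.univ : Finset (PT n)).filter
          fun x : PT n => (PT.rank (PT.comp x a) ≤ 1 ∧ W a (PT.comp x a) = v)).filter
        fun x => PT.comp x a = c).card = v := by
    intro c hc
    simp only [Sfin, Finset.mem_filter, Finset.mem_univ, true_and] at hc
    have h3 : (((Finset.univ : Finset (PT n)).filter
          fun x : PT n => (PT.rank (PT.comp x a) ≤ 1 ∧ W a (PT.comp x a) = v)).filter
        fun x => PT.comp x a = c) = (Finset.univ : Finset (PT n)).filter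
          fun x => PT.comp x a = c := by
      ext x
      simp only [Finset.mem_filter, Finset.mem_univ, true_and]
      constructor
      · rintro ⟨-, h⟩
        exact h
      · intro h
        exact ⟨by rw [h]; exact hc, h⟩
    rw [h3, card_fiber]
    rw [hc.2]
  rw [Finset.sum_congr rfl h2, Finset.sum_const, smul_eq_mul]


def Psi (t : Fin n) (J : Finset (Fin n)) : PT n := fun i => if i ∈ J then some t else none

def Jset (n f qq v : ℕ) : Finset (Finset (Fin n)) :=
  (Finset.univ : Finset (Fin n)).powerset.filter
    fun J => J ≠ ∅ ∧ f ^ J.card * qq ^ (n - J.card) = v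

lemma rank_psi (t : Fin n) (J : Finset (Fin n)) (hJ : J ≠ ∅) : PT.rank (Psi t J) = 1 := by
  unfold PT.rank
  rw [show (Finset.univ.filter fun s : Fin n => ∃ i, Psi t J i = some s) = {t} from ?_]
  · exact Finset.card_singleton t
  · ext s
    simp only [Finset.mem_filter, Finset.mem_univ, true_and, Finset.mem_singleton]
    constructor
    · rintro ⟨i, hi⟩
      unfold Psi at hi
      by_cases h : i ∈ J
      · rw [if_pos h] at hi
        exact (Option.some_inj.mp hi).symm
      · rw [if_neg h] at hi
        cases hi
    · rintro rfl
      obtain ⟨i, hi⟩ := Finset.nonempty_iff_ne_empty.mpr hJ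
      exact ⟨i, by unfold Psi; rw [if_pos hi]⟩

lemma W_psi (a : PT n) (t : Fin n) (J : Finset (Fin n)) :
    W a (Psi t J) = fib a t ^ J.card * q a ^ (n - J.card) := by
  unfold W
  rw [← Finset.prod_sdiff (Finset.subset_univ J)]
  have h1 : ∀ i ∈ J, w a (Psi t J i) = fib a t := by
    intro i hi
    unfold Psi
    rw [if_pos hi, w_some]
  have h2 : ∀ i ∈ (Finset.univ \ J), w a (Psi t J i) = q a := by
    intro i hi
    rw [Finset.mem_sdiff] at hi
    unfold Psi
    rw [if_neg hi.2, w_none]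
  rw [Finset.prod_congr rfl h1, Finset.prod_congr rfl h2, Finset.prod_const, Finset.prod_const,
    Finset.card_sdiff_of_subset (Finset.subset_univ J), Finset.card_univ, Fintype.card_fin]
  exact mul_comm _ _

lemma rank_eq_zero (c : PT n) : PT.rank c = 0 ↔ c = PT.zero := by
  unfold PT.rank
  rw [Finset.card_eq_zero, Finset.filter_eq_empty_iff]
  constructor
  · intro h
    funext i
    by_contra hne
    obtain ⟨s, hs⟩ := Option.ne_none_iff_exists'.mp hne
    exact h (Finset.mem_univ s) ⟨i, hs⟩
  · rintro rfl s _ ⟨i, hi⟩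
    cases hi

lemma psi_injOn (t : Fin n) (s : Set (Finset (Fin n))) : Set.InjOn (Psi t) s := by
  intro J _ J' _ h
  ext i
  constructor <;> intro hi
  · by_contra hne
    have h1 := congrFun h i
    unfold Psi at h1
    rw [if_pos hi, if_neg hne] at h1
    cases h1
  · by_contra hne
    have h1 := congrFun h i
    unfold Psi at h1
    rw [if_neg hne, if_pos hi] at h1
    cases h1

lemma card_Sfin (a : PT n) (v : ℕ) :
    (Sfin a v).card
      = (if q a ^ n = v then 1 else 0) + ∑ t : Fin n, (Jset n (fib a t) (q a) v).card := by
  classical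
  have hsplit : Sfin a v
      = (Finset.univ.filter fun c : PT n => PT.rank c = 0 ∧ W a c = v)
        ∪ (Finset.univ.filter fun c : PT n => PT.rank c = 1 ∧ W a c = v) := by
    ext c
    simp only [Sfin, Finset.mem_filter, Finset.mem_union, Finset.mem_univ, true_and]
    constructor
    · rintro ⟨h1, h2⟩
      interval_cases h : PT.rank c
      · exact Or.inl ⟨rfl, h2⟩
      · exact Or.inr ⟨rfl, h2⟩
    · rintro (⟨h1, h2⟩ | ⟨h1, h2⟩) <;> exact ⟨by omega, h2⟩
  have hdisj : Disjoint (Finset.univ.filter fun c : PT n => PT.rank c = 0 ∧ W a c = v)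
      (Finset.univ.filter fun c : PT n => PT.rank c = 1 ∧ W a c = v) := by
    rw [Finset.disjoint_left]
    intro c hc hc'
    simp only [Finset.mem_filter] at hc hc'
    omega
  have h0 : (Finset.univ.filter fun c : PT n => PT.rank c = 0 ∧ W a c = v).card
      = (if q a ^ n = v then 1 else 0) := by
    split_ifs with hv
    · rw [Finset.card_eq_one]
      refine ⟨PT.zero, ?_⟩
      ext c
      simp only [Finset.mem_filter, Finset.mem_univ, true_and, Finset.mem_singleton]
      constructor
      · rintro ⟨h1, h2⟩
        exact (rank_eq_zero c).mp h1
      · rintro rfl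
        exact ⟨(rank_eq_zero _).mpr rfl, by rw [W_zero]; exact hv⟩
    · rw [Finset.card_eq_zero, Finset.filter_eq_empty_iff]
      rintro c _ ⟨h1, h2⟩
      apply hv
      rw [← h2, (rank_eq_zero c).mp h1, W_zero]
  have h1 : (Finset.univ.filter fun c : PT n => PT.rank c = 1 ∧ W a c = v)
      = Finset.univ.biUnion fun t : Fin n => (Jset n (fib a t) (q a) v).image (Psi t) := by
    ext c
    simp only [Finset.mem_filter, Finset.mem_univ, true_and, Finset.mem_biUnion,
      Finset.mem_image]
    constructor
    · rintro ⟨hr, hW⟩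
      obtain ⟨t, ht⟩ := Finset.card_eq_one.mp hr
      have hmem : ∀ s : Fin n, (∃ i, c i = some s) ↔ s = t := by
        intro s
        rw [← Finset.mem_singleton, ← ht]
        simp
      have hct : ∀ i, c i ≠ none → c i = some t := by
        intro i hi
        obtain ⟨s, hs⟩ := Option.ne_none_iff_exists'.mp hi
        rw [hs, (hmem s).mp ⟨i, hs⟩]
      set J := Finset.univ.filter (fun i => c i ≠ none) with hJdef
      have hpsi : Psi t J = c := by
        funext i
        by_cases hi : c i = none
        · have hni : i ∉ J := by simp [hJdef, hi]
          unfold Psi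
          rw [if_neg hni, hi]
        · have hit : i ∈ J := by simp [hJdef, hi]
          unfold Psi
          rw [if_pos hit, hct i hi]
      have hJne : J ≠ ∅ := by
        obtain ⟨i, hi⟩ := (hmem t).mpr rfl
        apply Finset.ne_empty_of_mem (a := i)
        simp [hJdef, hi]
      refine ⟨t, J, ?_, hpsi⟩
      simp only [Jset, Finset.mem_filter, Finset.mem_powerset]
      exact ⟨Finset.subset_univ _, hJne, by rw [← W_psi a t J, hpsi]; exact hW⟩
    · rintro ⟨t, J, hJ, rfl⟩
      simp only [Jset, Finset.mem_filter, Finset.mem_powerset] at hJ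
      exact ⟨rank_psi t J hJ.2.1, by rw [W_psi]; exact hJ.2.2⟩
  have hdisj2 : ∀ t ∈ (Finset.univ : Finset (Fin n)), ∀ t' ∈ (Finset.univ : Finset (Fin n)),
      t ≠ t' → Disjoint ((Jset n (fib a t) (q a) v).image (Psi t))
        ((Jset n (fib a t') (q a) v).image (Psi t')) := by
    intro t _ t' _ hne
    rw [Finset.disjoint_left]
    rintro c hc hc'
    simp only [Finset.mem_image, Jset, Finset.mem_filter, Finset.mem_powerset] at hc hc'
    obtain ⟨J, ⟨-, hJne, -⟩, rfl⟩ := hc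
    obtain ⟨J', ⟨-, hJne', -⟩, hJ'⟩ := hc'
    obtain ⟨i, hi⟩ := Finset.nonempty_iff_ne_empty.mpr hJne
    have h1 : Psi t' J' i = Psi t J i := by rw [hJ']
    unfold Psi at h1
    rw [if_pos hi] at h1
    by_cases hi' : i ∈ J'
    · rw [if_pos hi'] at h1
      exact hne (Option.some_inj.mp h1).symm
    · rw [if_neg hi'] at h1
      cases h1
  rw [hsplit, Finset.card_union_of_disjoint hdisj, h0, h1, Finset.card_biUnion hdisj2]
  congr 1
  apply Finset.sum_congr rfl
  intro t _
  exact Finset.card_image_of_injOn (psi_injOn t _)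


lemma key (hn : 1 ≤ n) (qq : ℕ) (hq : 1 ≤ qq) (fa fb : Fin n → ℕ)
    (hfa : ∀ t, fa t ≤ n) (hfb : ∀ t, fb t ≤ n)
    (H : ∀ v, 0 < v → (∑ t : Fin n, (Jset n (fa t) qq v).card)
      = ∑ t : Fin n, (Jset n (fb t) qq v).card) :
    ∀ k, 1 ≤ k → (Finset.univ.filter fun t => fa t = k).card
      = (Finset.univ.filter fun t => fb t = k).card := by
  classical
  have regroup : ∀ f : Fin n → ℕ, (∀ t, f t ≤ n) → ∀ v,
      (∑ t : Fin n, (Jset n (f t) qq v).card)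
        = ∑ k ∈ Finset.range (n + 1),
            (Finset.univ.filter fun t => f t = k).card * (Jset n k qq v).card := by
    intro f hf v
    rw [← Finset.sum_fiberwise_of_maps_to (t := Finset.range (n + 1)) (g := f)
      (fun t _ => Finset.mem_range.mpr (Nat.lt_succ_of_le (hf t)))
      (fun t => (Jset n (f t) qq v).card)]
    apply Finset.sum_congr rfl
    intro k _
    rw [Finset.sum_congr rfl (fun t ht => ?_), Finset.sum_const, smul_eq_mul]
    have h1 := (Finset.mem_filter.mp ht).2
    rw [h1]
  intro k hk
  by_contra hne0
  have hksmall : k ≤ n := by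
    by_contra hkn
    push_neg at hkn
    apply hne0
    have e1 : (Finset.univ.filter fun t => fa t = k) = ∅ :=
      Finset.filter_eq_empty_iff.mpr (fun t _ => by have := hfa t; omega)
    have e2 : (Finset.univ.filter fun t => fb t = k) = ∅ :=
      Finset.filter_eq_empty_iff.mpr (fun t _ => by have := hfb t; omega)
    rw [e1, e2]
  set D := (Finset.range (n + 1)).filter
    (fun k => 1 ≤ k ∧ (Finset.univ.filter fun t => fa t = k).card
      ≠ (Finset.univ.filter fun t => fb t = k).card) with hD
  have hDne : D.Nonempty := by
    refine ⟨k, ?_⟩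
    simp only [hD, Finset.mem_filter, Finset.mem_range]
    exact ⟨by omega, hk, hne0⟩
  set K := D.max' hDne with hKdef
  have hKD : K ∈ D := D.max'_mem hDne
  simp only [hD, Finset.mem_filter, Finset.mem_range] at hKD
  obtain ⟨hKn, hK1, hKne⟩ := hKD
  set v : ℕ := if qq ≤ K then K ^ n else K * qq ^ (n - 1) with hv
  have hvpos : 0 < v := by
    rw [hv]
    split_ifs
    · exact pow_pos (by omega) n
    · exact Nat.mul_pos (by omega) (pow_pos (by omega) _)
  have hgK : 0 < (Jset n K qq v).card := by
    rw [Finset.card_pos]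
    rw [hv]
    split_ifs with hcase
    · refine ⟨Finset.univ, ?_⟩
      simp only [Jset, Finset.mem_filter, Finset.mem_powerset]
      refine ⟨Finset.subset_univ _, ?_, ?_⟩
      · exact Finset.ne_empty_of_mem (Finset.mem_univ (⟨0, hn⟩ : Fin n))
      · simp [Finset.card_univ]
    · refine ⟨{(⟨0, hn⟩ : Fin n)}, ?_⟩
      simp only [Jset, Finset.mem_filter, Finset.mem_powerset]
      refine ⟨Finset.subset_univ _, by simp, ?_⟩
      rw [Finset.card_singleton, pow_one]
  have hg0 : ∀ k', k' < K → (Jset n k' qq v).card = 0 := by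
    intro k' hk'
    rw [Finset.card_eq_zero]
    unfold Jset
    rw [Finset.filter_eq_empty_iff]
    rintro J hJp ⟨hJne, hJeq⟩
    have hj1 : 1 ≤ J.card := Finset.card_pos.mpr (Finset.nonempty_iff_ne_empty.mpr hJne)
    have hjn : J.card ≤ n := by
      have := Finset.card_le_card (Finset.subset_univ J)
      simpa [Finset.card_univ] using this
    have hlt : k' ^ J.card * qq ^ (n - J.card) < v := by
      rw [hv]
      split_ifs with hcase
      · calc k' ^ J.card * qq ^ (n - J.card) < K ^ J.card * K ^ (n - J.card) :=
            Nat.mul_lt_mul_of_lt_of_le (Nat.pow_lt_pow_left hk' (by omega))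
              (Nat.pow_le_pow_left hcase _) (pow_pos (by omega) _)
        _ = K ^ n := by rw [← pow_add]; congr 1; omega
      · push_neg at hcase
        have h2 : k' ^ J.card * qq ^ (n - J.card)
            = k' * (k' ^ (J.card - 1) * qq ^ (n - J.card)) := by
          rw [← mul_assoc]
          congr 1
          rw [← pow_succ']
          congr 1
          omega
        rw [h2]
        calc k' * (k' ^ (J.card - 1) * qq ^ (n - J.card))
            < K * (qq ^ (J.card - 1) * qq ^ (n - J.card)) := by
              apply Nat.mul_lt_mul_of_lt_of_le hk'
              · exact Nat.mul_le_mul_right _ (Nat.pow_le_pow_left (by omega) _)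
              · exact Nat.mul_pos (pow_pos (by omega) _) (pow_pos (by omega) _)
        _ = K * qq ^ (n - 1) := by rw [← pow_add]; congr 2; omega
    omega
  have Hv := H v hvpos
  rw [regroup fa hfa v, regroup fb hfb v] at Hv
  have herase : ∑ k' ∈ (Finset.range (n + 1)).erase K,
        (Finset.univ.filter fun t => fa t = k').card * (Jset n k' qq v).card
      = ∑ k' ∈ (Finset.range (n + 1)).erase K,
        (Finset.univ.filter fun t => fb t = k').card * (Jset n k' qq v).card := by
    apply Finset.sum_congr rfl
    intro k' hk'
    rw [Finset.mem_erase, Finset.mem_range] at hk'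
    rcases lt_or_gt_of_ne hk'.1 with h | h
    · rw [hg0 k' h, mul_zero, mul_zero]
    · have hCC : (Finset.univ.filter fun t => fa t = k').card
          = (Finset.univ.filter fun t => fb t = k').card := by
        by_contra hcc
        have hmem : k' ∈ D := by
          simp only [hD, Finset.mem_filter, Finset.mem_range]
          exact ⟨hk'.2, by omega, hcc⟩
        have := Finset.le_max' D k' hmem
        omega
      rw [hCC]
  have e1 := Finset.add_sum_erase (Finset.range (n + 1))
    (fun k' => (Finset.univ.filter fun t => fa t = k').card * (Jset n k' qq v).card)
    (Finset.mem_range.mpr hKn)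
  have e2 := Finset.add_sum_erase (Finset.range (n + 1))
    (fun k' => (Finset.univ.filter fun t => fb t = k').card * (Jset n k' qq v).card)
    (Finset.mem_range.mpr hKn)
  beta_reduce at e1 e2
  have hKterm : (Finset.univ.filter fun t => fa t = K).card * (Jset n K qq v).card
      = (Finset.univ.filter fun t => fb t = K).card * (Jset n K qq v).card := by omega
  exact hKne (Nat.eq_of_mul_eq_mul_right hgK hKterm)


lemma typeCount_eq_filter (a : PT n) (k : ℕ) :
    PT.typeCount a k = (Finset.univ.filter fun t => fib a t = k).card := rfl

lemma forward (hn : 1 ≤ n) (a b : PT n) (e : PT n ≃ PT n)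
    (he : ∀ x y, e (PT.dmul a x y) = PT.dmul b (e x) (e y)) :
    ∀ k, 1 ≤ k → PT.typeCount a k = PT.typeCount b k := by
  classical
  have hq : q a = q b := by
    have h1 := inv_zero_card e he
    rw [zero_card, zero_card] at h1
    exact Nat.pow_left_injective (by omega) h1
  have hS : ∀ v, 0 < v → (Sfin a v).card = (Sfin b v).card := by
    intro v hv
    have h1 := inv_P_card e he v
    rw [card_P hn a v, card_P hn b v] at h1
    exact Nat.eq_of_mul_eq_mul_right hv h1
  have hJ : ∀ v, 0 < v → (∑ t : Fin n, (Jset n (fib a t) (q a) v).card)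
      = ∑ t : Fin n, (Jset n (fib b t) (q a) v).card := by
    intro v hv
    have h1 := hS v hv
    rw [card_Sfin, card_Sfin, ← hq] at h1
    exact Nat.add_left_cancel h1
  intro k hk
  rw [typeCount_eq_filter, typeCount_eq_filter]
  exact key hn (q a) (one_le_q a) (fib a) (fib b) (fib_le a) (fib_le b) hJ k hk

lemma exists_perm_comp {β : Type _} [DecidableEq β] (f g : Fin n → β)
    (h : ∀ y : β, (Finset.univ.filter fun i => f i = y).card
      = (Finset.univ.filter fun i => g i = y).card) :
    ∃ σ : Equiv.Perm (Fin n), ∀ i, f (σ i) = g i := by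
  classical
  have hcard : ∀ y : β, Fintype.card {i : Fin n // g i = y}
      = Fintype.card {i : Fin n // f i = y} := by
    intro y
    rw [Fintype.card_subtype, Fintype.card_subtype, h y]
  let E : ∀ y : β, {i : Fin n // g i = y} ≃ {i : Fin n // f i = y} :=
    fun y => Fintype.equivOfCardEq (hcard y)
  let σ0 : Fin n → Fin n := fun i => (E (g i) ⟨i, rfl⟩).1
  have hσf : ∀ i, f (σ0 i) = g i := fun i => (E (g i) ⟨i, rfl⟩).2
  have hinj : Function.Injective σ0 := by
    intro i i' hii
    have hg : g i = g i' := by rw [← hσf i, ← hσf i', hii]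
    have haux : ∀ (y : β) (hy : g i' = y), σ0 i' = ((E y) ⟨i', hy⟩).1 := by
      intro y hy
      subst hy
      rfl
    have h2 : σ0 i' = ((E (g i)) ⟨i', hg.symm⟩).1 := haux (g i) hg.symm
    have h3 : (E (g i)) ⟨i, rfl⟩ = (E (g i)) ⟨i', hg.symm⟩ := by
      apply Subtype.ext
      rw [← h2]
      exact hii
    have h4 := (E (g i)).injective h3
    exact congrArg Subtype.val h4
  exact ⟨Equiv.ofBijective σ0 (Finite.injective_iff_bijective.mp hinj), fun i => hσf i⟩

lemma card_ne_none (c : PT n) :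
    (Finset.univ.filter fun i => c i ≠ none).card = ∑ t : Fin n, fib c t := by
  classical
  have h1 : (Finset.univ.filter fun i => c i ≠ none)
      = Finset.univ.biUnion (fun t : Fin n => Finset.univ.filter fun i => c i = some t) := by
    ext i
    simp [Option.ne_none_iff_exists', eq_comm]
  rw [h1, Finset.card_biUnion]
  · rfl
  · intro t _ t' _ hne
    rw [Function.onFun, Finset.disjoint_left]
    intro i hi hi'
    simp only [Finset.mem_filter, Finset.mem_univ, true_and] at hi hi'
    rw [hi] at hi'
    exact hne (Option.some_inj.mp hi')

lemma backward (a b : PT n) (h : ∀ k, 1 ≤ k → PT.typeCount a k = PT.typeCount b k) :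
    ∃ e : PT n ≃ PT n, ∀ x y : PT n, e (PT.dmul a x y) = PT.dmul b (e x) (e y) := by
  classical
  -- counts of all fiber sizes agree
  have hsum : ∀ f : Fin n → ℕ, (∀ t, f t ≤ n) →
      (Finset.univ.filter fun t => f t ≠ 0).card
        = ∑ k ∈ Finset.Icc 1 n, (Finset.univ.filter fun t => f t = k).card := by
    intro f hf
    rw [Finset.card_eq_sum_card_fiberwise (f := f) (t := Finset.Icc 1 n)
      (fun t ht => by
        simp only [Finset.mem_coe, Finset.mem_filter, Finset.mem_univ, true_and] at ht
        rw [Finset.mem_coe, Finset.mem_Icc]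
        exact ⟨by omega, hf t⟩)]
    apply Finset.sum_congr rfl
    intro k hk
    rw [Finset.mem_Icc] at hk
    congr 1
    ext t
    simp only [Finset.mem_filter, Finset.mem_univ, true_and]
    constructor
    · rintro ⟨-, h2⟩
      exact h2
    · intro h2
      exact ⟨by omega, h2⟩
  have hall : ∀ k : ℕ, (Finset.univ.filter fun t => fib a t = k).card
      = (Finset.univ.filter fun t => fib b t = k).card := by
    intro k
    rcases Nat.eq_zero_or_pos k with rfl | hk
    · have c1 := Finset.card_filter_add_card_filter_not
        (s := (Finset.univ : Finset (Fin n))) (p := fun t => fib a t = 0)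
      have c2 := Finset.card_filter_add_card_filter_not
        (s := (Finset.univ : Finset (Fin n))) (p := fun t => fib b t = 0)
      have s1 := hsum (fib a) (fib_le a)
      have s2 := hsum (fib b) (fib_le b)
      have hsums : ∑ k ∈ Finset.Icc 1 n, (Finset.univ.filter fun t => fib a t = k).card
          = ∑ k ∈ Finset.Icc 1 n, (Finset.univ.filter fun t => fib b t = k).card := by
        apply Finset.sum_congr rfl
        intro k hk
        rw [Finset.mem_Icc] at hk
        have := h k hk.1
        rw [typeCount_eq_filter, typeCount_eq_filter] at this
        exact this
      have hne1 : (Finset.univ.filter fun t => ¬fib a t = 0).card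
          = (Finset.univ.filter fun t => fib a t ≠ 0).card := rfl
      have hne2 : (Finset.univ.filter fun t => ¬fib b t = 0).card
          = (Finset.univ.filter fun t => fib b t ≠ 0).card := rfl
      omega
    · have := h k hk
      rw [typeCount_eq_filter, typeCount_eq_filter] at this
      exact this
  obtain ⟨v, hv⟩ := exists_perm_comp (fib b) (fib a) (fun k => (hall k).symm)
  -- v : Perm, hv : ∀ t, fib b (v t) = fib a t
  have hzc : PT.zcard a = PT.zcard b := by
    have hsa : ∑ t : Fin n, fib a t = ∑ t : Fin n, fib b t := by
      rw [← Equiv.sum_comp v (fib b)]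
      exact Finset.sum_congr rfl (fun t _ => (hv t).symm)
    have d1 := Finset.card_filter_add_card_filter_not
      (s := (Finset.univ : Finset (Fin n))) (p := fun i => a i = none)
    have d2 := Finset.card_filter_add_card_filter_not
      (s := (Finset.univ : Finset (Fin n))) (p := fun i => b i = none)
    have n1 := card_ne_none a
    have n2 := card_ne_none b
    have hne1 : (Finset.univ.filter fun i => ¬a i = none).card
        = (Finset.univ.filter fun i => a i ≠ none).card := rfl
    have hne2 : (Finset.univ.filter fun i => ¬b i = none).card
        = (Finset.univ.filter fun i => b i ≠ none).card := rfl
    unfold PT.zcard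
    omega
  have hfibers : ∀ y : Option (Fin n),
      (Finset.univ.filter fun i => (a i).map v = y).card
        = (Finset.univ.filter fun i => b i = y).card := by
    intro y
    cases y with
    | none =>
      have e1 : (Finset.univ.filter fun i => (a i).map v = none)
          = Finset.univ.filter fun i => a i = none := by
        ext i
        simp [Option.map_eq_none_iff]
      rw [e1]
      exact hzc
    | some s =>
      have e1 : (Finset.univ.filter fun i => (a i).map v = some s)
          = Finset.univ.filter fun i => a i = some (v.symm s) := by
        ext i
        simp only [Finset.mem_filter, Finset.mem_univ, true_and, Option.map_eq_some_iff]
        constructor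
        · rintro ⟨t, h1, h2⟩
          rw [h1]
          congr 1
          rw [← h2, Equiv.symm_apply_apply]
        · intro h1
          exact ⟨v.symm s, h1, v.apply_symm_apply s⟩
      rw [e1]
      have h2 := hv (v.symm s)
      rw [v.apply_symm_apply] at h2
      exact h2.symm
  obtain ⟨u, hu⟩ := exists_perm_comp (fun i => (a i).map v) b hfibers
  -- hu : ∀ i, (a (u i)).map v = b i
  refine ⟨⟨fun x => fun i => (x (v.symm i)).map u.symm,
           fun x => fun i => (x (v i)).map u, ?_, ?_⟩, ?_⟩
  · intro x
    funext i
    show ((x (v.symm (v i))).map u.symm).map u = x i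
    rw [Equiv.symm_apply_apply, Option.map_map]
    cases x i <;> simp
  · intro x
    funext i
    show ((x (v (v.symm i))).map u).map u.symm = x i
    rw [Equiv.apply_symm_apply, Option.map_map]
    cases x i <;> simp
  · intro x y
    funext i
    show (PT.dmul a x y (v.symm i)).map u.symm = _
    simp only [PT.dmul, PT.comp, Equiv.coe_fn_mk]
    cases hx : x (v.symm i) with
    | none => simp
    | some jj =>
      simp only [Option.bind_some, Option.map_some]
      have hb : b (u.symm jj) = (a jj).map v := by
        rw [← hu (u.symm jj), Equiv.apply_symm_apply]
      rw [hb]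
      cases ha : a jj with
      | none => simp
      | some s =>
        simp only [Option.map_some, Option.bind_some]
        rw [Equiv.symm_apply_apply]

end PTaux

/-- `(PT n, *_a)` and `(PT n, *_b)` are isomorphic iff `a` and `b` have the same type. -/
theorem iso_iff_same_type {n : ℕ} (a b : PT n) :
    (∃ e : PT n ≃ PT n, ∀ x y : PT n, e (PT.dmul a x y) = PT.dmul b (e x) (e y)) ↔
      ∀ k : ℕ, 1 ≤ k → PT.typeCount a k = PT.typeCount b k := by
  rcases Nat.eq_zero_or_pos n with rfl | hn
  · constructor
    · intro _ k _
      simp [PT.typeCount]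
    · intro _
      exact ⟨Equiv.refl _, fun x y => by funext i; exact i.elim0⟩
  · constructor
    · rintro ⟨e, he⟩
      exact PTaux.forward hn a b e he
    · intro h
      exact PTaux.backward a b h
end
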